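/- Let a, b, r, t be positive integers with gcd(a,b) = 1, and let ξ_d := e^{2πi/d}. Then the number of pairs (m,n) of nonnegative integers with m·a + n·b ≤ t·r equals (tr)²/(2ab) + (tr/2)·(1/a + 1/b + 1/(ab)) + (1/4)·(1 + 1/a + 1/b) + (1/12)·(a/b + b/a + 1/(ab)) + (1/a)·Σ_{j=1}^{a-1} ξ_a^{j(−tr)}/((1 − ξ_a^{jb})(1 − ξ_a^{j})) + (1/b)·Σ_{l=1}^{b-1} ξ_b^{l(−tr)}/((1 − ξ_b^{la})(1 − ξ_b^{l})). Equivalently, this expression equals 1 plus the largest index k such that N_k(a/r, b/r) ≤ t. -/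

import Mathlib

/-- `Nseq a b k` is the `k`-th term (indexed from 0) of the nondecreasing sequence listing,
with multiplicities, all numbers `m*a + n*b` with `m n : ℕ`; equivalently the least `t ≥ 0`
such that there are at least `k+1` pairs `(m,n)` with `m*a + n*b ≤ t`. -/
noncomputable def Nseq (a b : ℝ) (k : ℕ) : ℝ :=
  sInf {t : ℝ | 0 ≤ t ∧ k + 1 ≤ {p : ℕ × ℕ | (p.1 : ℝ) * a + (p.2 : ℝ) * b ≤ t}.ncard}

/-- `Mseq c d k = min {m*c + n*d : (m+1)*(n+1) ≥ k+1}`. -/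
noncomputable def Mseq (c d : ℝ) (k : ℕ) : ℝ :=
  sInf {t : ℝ | ∃ m n : ℕ, k + 1 ≤ (m + 1) * (n + 1) ∧ t = (m : ℝ) * c + (n : ℝ) * d}

/-- `dFun a b = inf {λ > 0 : N_k(1,a) ≤ λ M_k(1,b) for all k}`. -/
noncomputable def dFun (a b : ℝ) : ℝ :=
  sInf {l : ℝ | 0 < l ∧ ∀ k : ℕ, Nseq 1 a k ≤ l * Mseq 1 b k}

open Finset

namespace EhrhartAux




lemma geom_zero {N : ℕ} {x : ℂ} (hx1 : x ≠ 1) (hxN : x ^ N = 1) :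
    ∑ j ∈ range N, x ^ j = 0 := by
  rw [geom_sum_eq hx1, hxN, sub_self, zero_div]

lemma sum_j_pow {N : ℕ} {x : ℂ} (hx1 : x ≠ 1) (hxN : x ^ N = 1) :
    (x - 1) * ∑ j ∈ range N, (j : ℂ) * x ^ j = N := by
  have tele := Finset.sum_range_sub (fun j => (j : ℂ) * x ^ j) N
  have geo := geom_zero hx1 hxN
  calc (x - 1) * ∑ j ∈ range N, (j : ℂ) * x ^ j
      = ∑ j ∈ range N, (((j + 1 : ℕ) : ℂ) * x ^ (j + 1) - (j : ℂ) * x ^ j)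
          - x * ∑ j ∈ range N, x ^ j := by
        rw [Finset.mul_sum, Finset.mul_sum, ← Finset.sum_sub_distrib]
        apply Finset.sum_congr rfl; intro j _; push_cast; ring
    _ = (N : ℂ) * x ^ N - ((0:ℕ) : ℂ) * x ^ 0 - x * 0 := by rw [tele, geo]
    _ = N := by rw [hxN]; ring

lemma inv_one_sub {N : ℕ} (hN : N ≠ 0) {x : ℂ} (hx1 : x ≠ 1) (hxN : x ^ N = 1) :
    (1 - x)⁻¹ = -(1 / N) * ∑ j ∈ range N, (j : ℂ) * x ^ j := by
  have h := sum_j_pow hx1 hxN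
  have hx0 : x - 1 ≠ 0 := sub_ne_zero.mpr hx1
  have hN0 : (N : ℂ) ≠ 0 := Nat.cast_ne_zero.mpr hN
  have h1 : (1 : ℂ) - x ≠ 0 := by
    intro h'; apply hx1; linear_combination -h'
  field_simp
  linear_combination -h









lemma sum_range_cast (n : ℕ) : ∑ j ∈ range n, (j : ℂ) = n * (n - 1) / 2 := by
  induction n with
  | zero => simp
  | succ n ih => rw [Finset.sum_range_succ, ih]; push_cast; ring

lemma sum_range_sq_cast (n : ℕ) :
    ∑ j ∈ range n, (j : ℂ) ^ 2 = n * (n - 1) * (2 * n - 1) / 6 := by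
  induction n with
  | zero => simp
  | succ n ih => rw [Finset.sum_range_succ, ih]; push_cast; ring

lemma range_sum_split {N : ℕ} (hN : N ≠ 0) (g : ℕ → ℂ) :
    ∑ l ∈ range N, g l = g 0 + ∑ l ∈ Finset.Icc 1 (N - 1), g l := by
  have h1 : Finset.Icc 1 (N - 1) = Finset.Ico 1 N := by
    rw [← Finset.Ico_add_one_right_eq_Icc]; congr 1; omega
  rw [h1, Finset.range_eq_Ico, Finset.sum_eq_sum_Ico_succ_bot (Nat.pos_of_ne_zero hN)]

lemma star_id {N : ℕ} (hN : N ≠ 0) {ζ : ℂ} (hζ : IsPrimitiveRoot ζ N) (s : ℕ) :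
    ∑ l ∈ Finset.Icc 1 (N - 1), ζ ^ (-((l : ℤ) * s)) / (1 - ζ ^ l)
      = ((N : ℂ) - 1) / 2 - ((s % N : ℕ) : ℂ) := by
  have hζN : ζ ^ N = 1 := hζ.pow_eq_one
  have hζ0 : ζ ≠ 0 := by
    intro h; rw [h, zero_pow hN] at hζN; exact zero_ne_one hζN
  set y : ℕ → ℂ := fun j => ζ ^ ((j : ℤ) - s) with hy
  have hyN : ∀ j, y j ^ N = 1 := by
    intro j
    rw [hy]; simp only
    rw [← zpow_natCast (ζ ^ ((j : ℤ) - s)) N, ← zpow_mul, mul_comm, zpow_mul,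
      zpow_natCast, hζN, one_zpow]
  have hy1 : ∀ j ∈ range N, (y j = 1 ↔ j = s % N) := by
    intro j hj
    rw [hy]; simp only
    rw [hζ.zpow_eq_one_iff_dvd]
    rw [Finset.mem_range] at hj
    constructor
    · intro h
      have : s ≡ j [MOD N] := (Nat.modEq_iff_dvd).mpr h
      have := this.symm
      have hmod := Nat.ModEq.symm (Nat.modEq_iff_dvd.mpr h)
      calc j = j % N := (Nat.mod_eq_of_lt hj).symm
        _ = s % N := hmod
    · rintro rfl
      exact (Nat.modEq_iff_dvd).mp (Nat.mod_modEq s N).symm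
  -- step 1: termwise rewrite
  have hterm : ∀ l ∈ Finset.Icc 1 (N - 1),
      ζ ^ (-((l : ℤ) * s)) / (1 - ζ ^ l)
        = -(1 / N) * ∑ j ∈ range N, (j : ℂ) * y j ^ l := by
    intro l hl
    rw [Finset.mem_Icc] at hl
    have hlN : l < N := by omega
    have hζl1 : ζ ^ l ≠ 1 := hζ.pow_ne_one_of_pos_of_lt (by omega) hlN
    have hζlN : (ζ ^ l) ^ N = 1 := by
      rw [← pow_mul, mul_comm, pow_mul, hζN, one_pow]
    rw [div_eq_mul_inv, inv_one_sub hN hζl1 hζlN]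
    have key : ∀ j ∈ range N, (j : ℂ) * y j ^ l
        = ζ ^ (-((l : ℤ) * s)) * ((j : ℂ) * (ζ ^ l) ^ j) := by
      intro j _
      rw [hy]; simp only
      have e1 : (ζ ^ ((j : ℤ) - s)) ^ l = ζ ^ (((j : ℤ) - s) * l) := by
        rw [← zpow_natCast (ζ ^ ((j : ℤ) - s)) l, ← zpow_mul]
      have e2 : ((ζ ^ l : ℂ)) ^ j = ζ ^ ((l : ℤ) * j) := by
        rw [← zpow_natCast ζ l, ← zpow_natCast (ζ ^ (l : ℤ)) j, ← zpow_mul]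
      have e3 : ζ ^ (-((l : ℤ) * s)) * ζ ^ ((l : ℤ) * j) = ζ ^ (((j : ℤ) - s) * l) := by
        rw [← zpow_add₀ hζ0]; congr 1; ring
      rw [e1, e2, ← e3]; ring
    rw [Finset.sum_congr rfl key, ← Finset.mul_sum]
    ring
  rw [Finset.sum_congr rfl hterm]
  -- step 2: swap sums
  rw [← Finset.mul_sum, Finset.sum_comm]
  -- now inner over l
  have hinner : ∀ j ∈ range N,
      ∑ l ∈ Finset.Icc 1 (N - 1), (j : ℂ) * y j ^ l
        = (j : ℂ) * ((if j = s % N then (N : ℂ) else 0) - 1) := by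
    intro j hj
    rw [← Finset.mul_sum]
    congr 1
    have hsplit := range_sum_split hN (fun l => y j ^ l)
    have : ∑ l ∈ Finset.Icc 1 (N - 1), y j ^ l = (∑ l ∈ range N, y j ^ l) - 1 := by
      rw [hsplit]; simp
    rw [this]
    congr 1
    by_cases h1 : y j = 1
    · rw [if_pos ((hy1 j hj).mp h1), h1]; simp
    · rw [if_neg (fun h => h1 ((hy1 j hj).mpr h)), geom_zero h1 (hyN j)]
  rw [Finset.sum_congr rfl hinner]
  -- step 3: evaluate
  have hsm : s % N ∈ range N := Finset.mem_range.mpr (Nat.mod_lt s (Nat.pos_of_ne_zero hN))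
  have expand : ∀ j ∈ range N, (j : ℂ) * ((if j = s % N then (N : ℂ) else 0) - 1)
      = (if j = s % N then ((s % N : ℕ) : ℂ) * N else 0) - (j : ℂ) := by
    intro j hj
    by_cases h : j = s % N
    · subst h; simp; ring
    · simp [h]
  rw [Finset.sum_congr rfl expand, Finset.sum_sub_distrib, Finset.sum_ite_eq' (range N),
    if_pos hsm, sum_range_cast]
  have hN0 : (N : ℂ) ≠ 0 := Nat.cast_ne_zero.mpr hN
  field_simp
  ring



noncomputable def polyPart (a b T : ℕ) : ℂ :=
  (T : ℂ) ^ 2 / (2 * a * b) + (T : ℂ) / 2 * (1 / a + 1 / b + 1 / (a * b))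
    + (1 / 4) * (1 + 1 / a + 1 / b) + (1 / 12) * ((a : ℂ) / b + (b : ℂ) / a + 1 / (a * b))

noncomputable def rootSum (a b T : ℕ) : ℂ :=
  ∑ j ∈ Finset.Icc 1 (a - 1),
    Complex.exp (2 * Real.pi * Complex.I / a) ^ (-((j : ℤ) * T)) /
      ((1 - Complex.exp (2 * Real.pi * Complex.I / a) ^ (j * b)) *
        (1 - Complex.exp (2 * Real.pi * Complex.I / a) ^ j))

noncomputable def fF (a b T : ℕ) : ℂ :=
  polyPart a b T + (1 / a) * rootSum a b T + (1 / b) * rootSum b a T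

lemma polyPart_symm (a b T : ℕ) : polyPart a b T = polyPart b a T := by
  unfold polyPart; ring

lemma fF_symm (a b T : ℕ) : fF a b T = fF b a T := by
  unfold fF; rw [polyPart_symm]; ring

lemma rootSum_shift (a b T : ℕ) (ha : a ≠ 0) : rootSum a b (T + a) = rootSum a b T := by
  unfold rootSum
  apply Finset.sum_congr rfl
  intro j _
  have hζ := Complex.isPrimitiveRoot_exp a ha
  set ζ := Complex.exp (2 * Real.pi * Complex.I / a)
  have hζ0 : ζ ≠ 0 := Complex.exp_ne_zero _
  have hζa : ζ ^ a = 1 := hζ.pow_eq_one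
  congr 1
  have he : (-((j : ℤ) * ((T + a : ℕ) : ℤ))) = (-((j : ℤ) * T)) + (a : ℤ) * (-(j : ℤ)) := by
    push_cast; ring
  rw [he, zpow_add₀ hζ0, zpow_mul, zpow_natCast, hζa, one_zpow, mul_one]

lemma rootSum_rec (a b T : ℕ) (ha : a ≠ 0) (hb : b ≠ 0) (hab : Nat.Coprime a b) :
    rootSum b a (T + a)
      = rootSum b a T + (((b : ℂ) - 1) / 2 - (((T + a) % b : ℕ) : ℂ)) := by
  have hζ := Complex.isPrimitiveRoot_exp b hb
  set ζ := Complex.exp (2 * Real.pi * Complex.I / b) with hzdef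
  have hζ0 : ζ ≠ 0 := Complex.exp_ne_zero _
  rw [← star_id hb hζ (T + a)]
  unfold rootSum
  rw [← Finset.sum_add_distrib]
  apply Finset.sum_congr rfl
  intro l hl
  rw [Finset.mem_Icc] at hl
  have hd2 : (1 : ℂ) - ζ ^ l ≠ 0 := by
    have h2 := hζ.pow_ne_one_of_pos_of_lt (by omega : l ≠ 0) (by omega : l < b)
    intro h; apply h2; linear_combination -h
  have hd1 : (1 : ℂ) - ζ ^ (l * a) ≠ 0 := by
    have hne : ζ ^ (l * a) ≠ 1 := by
      intro h1
      rw [hζ.pow_eq_one_iff_dvd] at h1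
      have hbl : b ∣ l := Nat.Coprime.dvd_of_dvd_mul_right (Nat.Coprime.symm hab) h1
      have := Nat.le_of_dvd (by omega) hbl
      omega
    intro h; apply hne; linear_combination -h
  have he : ζ ^ (-((l : ℤ) * T)) = ζ ^ (-((l : ℤ) * ((T + a : ℕ) : ℤ))) * ζ ^ (l * a) := by
    rw [← zpow_natCast ζ (l * a), ← zpow_add₀ hζ0]
    congr 1; push_cast; ring
  rw [he]
  set u := ζ ^ (-((l : ℤ) * ((T + a : ℕ) : ℤ))) with hu
  set w := ζ ^ (l * a) with hw
  set v := ζ ^ l with hv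
  field_simp
  ring

lemma polyPart_alt (a b T : ℕ) (ha : a ≠ 0) (hb : b ≠ 0) :
    polyPart a b T = (6 * (T : ℂ) ^ 2 + 6 * (T : ℂ) * ((a : ℂ) + b + 1)
      + 3 * ((a : ℂ) * b + a + b) + (a : ℂ) ^ 2 + (b : ℂ) ^ 2 + 1) / (12 * a * b) := by
  have ha0 : (a : ℂ) ≠ 0 := Nat.cast_ne_zero.mpr ha
  have hb0 : (b : ℂ) ≠ 0 := Nat.cast_ne_zero.mpr hb
  unfold polyPart
  field_simp
  ring_nf

set_option maxHeartbeats 1000000 in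
lemma polyPart_rec
 (a b T : ℕ) (ha : a ≠ 0) (hb : b ≠ 0) :
    polyPart a b (T + a) = polyPart a b T + ((T : ℂ) + a) / b + 1 / 2 + 1 / (2 * b) := by
  have ha0 : (a : ℂ) ≠ 0 := Nat.cast_ne_zero.mpr ha
  have hb0 : (b : ℂ) ≠ 0 := Nat.cast_ne_zero.mpr hb
  rw [polyPart_alt a b (T+a) ha hb, polyPart_alt a b T ha hb]
  have ha0 : (a : ℂ) ≠ 0 := Nat.cast_ne_zero.mpr ha
  have hb0' : (b : ℂ) ≠ 0 := Nat.cast_ne_zero.mpr hb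
  have h12 : (12 : ℂ) * a * b ≠ 0 := by
    simp [ha0, hb0']
  rw [div_eq_iff h12]
  push_cast
  field_simp
  ring

lemma fF_rec_a (a b T : ℕ) (ha : a ≠ 0) (hb : b ≠ 0) (hab : Nat.Coprime a b) :
    fF a b (T + a) = fF a b T + (((T + a) / b + 1 : ℕ) : ℂ) := by
  have hb0 : (b : ℂ) ≠ 0 := Nat.cast_ne_zero.mpr hb
  unfold fF
  rw [rootSum_shift a b T ha, rootSum_rec a b T ha hb hab, polyPart_rec a b T ha hb]
  have hdm : ((T + a : ℕ) : ℂ) = (b : ℂ) * (((T + a) / b : ℕ) : ℂ) + (((T + a) % b : ℕ) : ℂ) := by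
    exact_mod_cast congrArg (Nat.cast : ℕ → ℂ) (Nat.div_add_mod (T + a) b).symm
  push_cast
  push_cast at hdm
  have hbinv : (b : ℂ) * (b : ℂ)⁻¹ = 1 := mul_inv_cancel₀ hb0
  linear_combination hdm / (b : ℂ) + ((1:ℂ)/2 + (((T + a) / b : ℕ) : ℂ)) * hbinv

lemma fF_rec_b (a b T : ℕ) (ha : a ≠ 0) (hb : b ≠ 0) (hab : Nat.Coprime a b) :
    fF a b (T + b) = fF a b T + (((T + b) / a + 1 : ℕ) : ℂ) := by
  rw [fF_symm a b, fF_symm a b, fF_rec_a b a T hb ha hab.symm]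

def cntF (a b T : ℕ) : Finset (ℕ × ℕ) :=
  (range (T + 1) ×ˢ range (T + 1)).filter (fun p => p.1 * a + p.2 * b ≤ T)

def cnt (a b T : ℕ) : ℕ := (cntF a b T).card

lemma mem_cntF {a b T : ℕ} (ha : a ≠ 0) (hb : b ≠ 0) (p : ℕ × ℕ) :
    p ∈ cntF a b T ↔ p.1 * a + p.2 * b ≤ T := by
  unfold cntF
  rw [Finset.mem_filter, Finset.mem_product, Finset.mem_range, Finset.mem_range]
  constructor
  · exact fun h => h.2
  · intro h
    refine ⟨⟨?_, ?_⟩, h⟩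
    · have h1 : p.1 * 1 ≤ p.1 * a := Nat.mul_le_mul_left _ (by omega)
      omega
    · have h2 : p.2 * 1 ≤ p.2 * b := Nat.mul_le_mul_left _ (by omega)
      omega

lemma cnt_symm (a b T : ℕ) (ha : a ≠ 0) (hb : b ≠ 0) : cnt a b T = cnt b a T := by
  unfold cnt
  apply Finset.card_bij (fun p _ => Prod.swap p)
  · intro p hp
    rw [mem_cntF ha hb] at hp
    rw [mem_cntF hb ha]
    simpa [Prod.swap] using by omega
  · intro p hp q hq h
    exact Prod.swap_injective h
  · intro q hq
    refine ⟨Prod.swap q, ?_, by simp⟩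
    rw [mem_cntF hb ha] at hq
    rw [mem_cntF ha hb]
    simpa [Prod.swap] using by omega

lemma filter_le_range {K T : ℕ} (hK : K ≤ T) :
    (range (T + 1)).filter (fun n => n ≤ K) = range (K + 1) := by
  ext n
  simp only [Finset.mem_filter, Finset.mem_range]
  omega

lemma cnt_eq_sum (a b T : ℕ) (ha : a ≠ 0) (hb : b ≠ 0) :
    cnt a b T = ∑ m ∈ range (T + 1), (if m * a ≤ T then (T - m * a) / b + 1 else 0) := by
  unfold cnt
  rw [Finset.card_eq_sum_card_fiberwise
    (f := fun p : ℕ × ℕ => p.1) (t := range (T + 1)) ?side]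
  case side =>
    intro p hp
    rw [Finset.mem_coe, mem_cntF ha hb] at hp
    simp only [Finset.mem_coe, Finset.mem_range]
    have h1 : p.1 * 1 ≤ p.1 * a := Nat.mul_le_mul_left _ (by omega)
    omega
  apply Finset.sum_congr rfl
  intro m _
  have himg : (cntF a b T).filter (fun p => p.1 = m)
      = ((range (T + 1)).filter (fun n => m * a + n * b ≤ T)).image (fun n => (m, n)) := by
    ext p
    simp only [Finset.mem_filter, Finset.mem_image, mem_cntF ha hb, Finset.mem_range]
    constructor
    · rintro ⟨h1, h2⟩
      refine ⟨p.2, ⟨?_, ?_⟩, ?_⟩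
      · have h2b : p.2 * 1 ≤ p.2 * b := Nat.mul_le_mul_left _ (by omega)
        omega
      · rw [← h2]; exact h1
      · simp [← h2]
    · rintro ⟨n, ⟨hn1, hn2⟩, rfl⟩
      exact ⟨hn2, rfl⟩
  rw [himg, Finset.card_image_of_injective _ (fun x y h => by simpa using h)]
  by_cases hma : m * a ≤ T
  · rw [if_pos hma]
    have hcond : ∀ n, (m * a + n * b ≤ T) ↔ n ≤ (T - m * a) / b := by
      intro n
      rw [Nat.le_div_iff_mul_le (by omega : 0 < b)]
      omega
    have : (range (T + 1)).filter (fun n => m * a + n * b ≤ T)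
        = (range (T + 1)).filter (fun n => n ≤ (T - m * a) / b) := by
      apply Finset.filter_congr
      intro n _
      simp [hcond n]
    rw [this, filter_le_range ?hKT, Finset.card_range]
    case hKT =>
      have := Nat.div_le_self (T - m * a) b
      omega
  · rw [if_neg hma]
    have : (range (T + 1)).filter (fun n => m * a + n * b ≤ T) = ∅ := by
      apply Finset.filter_false_of_mem
      intro n _
      omega
    rw [this, Finset.card_empty]

lemma cnt_rec_a (a b T : ℕ) (ha : a ≠ 0) (hb : b ≠ 0) :
    cnt a b (T + a) = cnt a b T + ((T + a) / b + 1) := by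
  rw [cnt_eq_sum a b (T + a) ha hb, cnt_eq_sum a b T ha hb]
  rw [Finset.sum_range_succ' _ (T + a)]
  have h0 : (if 0 * a ≤ T + a then (T + a - 0 * a) / b + 1 else 0) = (T + a) / b + 1 := by
    simp
  rw [h0]
  have hterm : ∀ m, (if (m + 1) * a ≤ T + a then (T + a - (m + 1) * a) / b + 1 else 0)
      = (if m * a ≤ T then (T - m * a) / b + 1 else 0) := by
    intro m
    have e1 : (m + 1) * a = m * a + a := by ring
    by_cases h : m * a ≤ T
    · rw [if_pos (by omega), if_pos h]
      congr 2
      omega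
    · rw [if_neg (by omega), if_neg h]
  rw [Finset.sum_congr rfl (fun m _ => hterm m)]
  congr 1
  apply (Finset.sum_subset (Finset.range_subset_range.mpr (by omega : T + 1 ≤ T + a)) _).symm
  intro m _ hm
  rw [Finset.mem_range] at hm
  push_neg at hm
  rw [if_neg]
  have h1 : m * 1 ≤ m * a := Nat.mul_le_mul_left _ (by omega)
  omega

lemma cnt_rec_b (a b T : ℕ) (ha : a ≠ 0) (hb : b ≠ 0) :
    cnt a b (T + b) = cnt a b T + ((T + b) / a + 1) := by
  rw [cnt_symm a b (T + b) ha hb, cnt_symm a b T ha hb, cnt_rec_a b a T hb ha]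

lemma period_add {g : ℕ → ℂ} {p : ℕ} (hp : ∀ T, g (T + p) = g T) :
    ∀ k T, g (T + k * p) = g T := by
  intro k
  induction k with
  | zero => simp
  | succ k ih =>
    intro T
    have e : T + (k + 1) * p = T + k * p + p := by ring
    rw [e, hp (T + k * p), ih T]

lemma period_gcd {g : ℕ → ℂ} (p q : ℕ) :
    (∀ T, g (T + p) = g T) → (∀ T, g (T + q) = g T) →
      ∀ T, g (T + Nat.gcd p q) = g T := by
  induction p, q using Nat.gcd.induction with
  | H0 n => intro _ hq; simpa using hq
  | H1 m n hm ih =>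
    intro hm' hn'
    have hnm : ∀ T, g (T + n % m) = g T := by
      intro T
      have h1 := period_add hm' (n / m) (T + n % m)
      rw [add_assoc, Nat.mod_add_div'] at h1
      rw [← h1, hn' T]
    rw [Nat.gcd_rec]
    exact ih hnm hm'

lemma const_of_period_one {g : ℕ → ℂ} (h1 : ∀ T, g (T + 1) = g T) : ∀ T, g T = g 0 := by
  intro T
  induction T with
  | zero => rfl
  | succ T ih => rw [h1 T] at *; exact ih

lemma root_period_sum {N : ℕ} (c : ℕ) (hN : N ≠ 0) {ζ : ℂ} (hζ : IsPrimitiveRoot ζ N)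
    {j : ℕ} (hj : j ∈ Finset.Icc 1 (N - 1)) (hdvd : N ∣ c) :
    ∑ T ∈ range c, ζ ^ (-((j : ℤ) * T)) = 0 := by
  rw [Finset.mem_Icc] at hj
  have hζj : ζ ^ j ≠ 1 := hζ.pow_ne_one_of_pos_of_lt (by omega) (by omega)
  have hrw : ∀ T ∈ range c, ζ ^ (-((j : ℤ) * T)) = ((ζ ^ j)⁻¹) ^ T := by
    intro T _
    rw [← zpow_natCast ζ j, ← zpow_neg, ← zpow_natCast (ζ ^ (-(j : ℤ))) T, ← zpow_mul]
    congr 1; push_cast; ring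
  rw [Finset.sum_congr rfl hrw]
  apply geom_zero
  · intro h; apply hζj; rw [← inv_inv (ζ ^ j), h, inv_one]
  · rw [inv_pow, ← pow_mul,
      (hζ.pow_eq_one_iff_dvd (j * c)).mpr (Dvd.dvd.mul_left hdvd j), inv_one]

lemma sum_fF (a b : ℕ) (ha : a ≠ 0) (hb : b ≠ 0) :
    ∑ T ∈ range (a * b), fF a b T = ∑ T ∈ range (a * b), polyPart a b T := by
  unfold fF
  rw [Finset.sum_add_distrib, Finset.sum_add_distrib]
  have hgen : ∀ a' b' : ℕ, a' ≠ 0 → a' ∣ a * b →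
      ∑ T ∈ range (a * b), (1 / (a' : ℂ)) * rootSum a' b' T = 0 := by
    intro a' b' ha' hdvd
    rw [← Finset.mul_sum]
    unfold rootSum
    rw [Finset.sum_comm]
    have hz : ∑ j ∈ Finset.Icc 1 (a' - 1), ∑ T ∈ range (a * b),
        Complex.exp (2 * Real.pi * Complex.I / a') ^ (-((j : ℤ) * T)) /
          ((1 - Complex.exp (2 * Real.pi * Complex.I / a') ^ (j * b')) *
            (1 - Complex.exp (2 * Real.pi * Complex.I / a') ^ j)) = 0 := by
      apply Finset.sum_eq_zero
      intro j hj
      rw [← Finset.sum_div]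
      rw [root_period_sum (a * b) ha' (Complex.isPrimitiveRoot_exp a' ha') hj hdvd]
      exact zero_div _
    rw [hz, mul_zero]
  rw [hgen a b ha (Dvd.intro b rfl), hgen b a hb (Dvd.intro_left a rfl), add_zero, add_zero]

lemma sumdiv (b : ℕ) (hb : b ≠ 0) (K : ℕ) :
    ∑ k ∈ range K, ((k / b : ℕ) : ℂ)
      = ((K / b : ℕ) : ℂ) * ((K : ℂ) + ((K % b : ℕ) : ℂ) - b) / 2 := by
  induction K with
  | zero => simp
  | succ K ih =>
    rw [Finset.sum_range_succ, ih]
    have hdm : b * (K / b) + K % b = K := Nat.div_add_mod K b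
    have hdm1 : b * ((K + 1) / b) + (K + 1) % b = K + 1 := Nat.div_add_mod (K + 1) b
    by_cases hd : b ∣ (K + 1)
    · have hq1 : (K + 1) / b = K / b + 1 := by rw [Nat.succ_div, if_pos hd]
      have hm1 : (K + 1) % b = 0 := by
        obtain ⟨c, hc⟩ := hd
        rw [hc, Nat.mul_mod_right]
      rw [hq1, hm1, Nat.mul_succ] at hdm1
      have hmK : K % b + 1 = b := by omega
      have cq1 : (((K + 1) / b : ℕ) : ℂ) = ((K / b : ℕ) : ℂ) + 1 := by
        rw [hq1]; push_cast; ring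
      have cm1 : (((K + 1) % b : ℕ) : ℂ) = 0 := by rw [hm1]; simp
      have cmK : ((K % b : ℕ) : ℂ) = (b : ℂ) - 1 := by
        have := congrArg (Nat.cast : ℕ → ℂ) hmK
        push_cast at this
        linear_combination this
      have cdm : (b : ℂ) * ((K / b : ℕ) : ℂ) + ((b : ℂ) - 1) = (K : ℂ) := by
        have := congrArg (Nat.cast : ℕ → ℂ) hdm
        push_cast at this
        rw [cmK] at this
        linear_combination this
      rw [cq1, cm1, cmK]
      push_cast
      linear_combination ((1 : ℂ) / 2) * cdm
    · have hq1 : (K + 1) / b = K / b := by rw [Nat.succ_div, if_neg hd, add_zero]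
      have hm1 : (K + 1) % b = K % b + 1 := by
        rw [hq1] at hdm1; omega
      rw [hq1, hm1]
      push_cast
      ring

lemma cnt_eq_sum_b (a b T : ℕ) (ha : a ≠ 0) (hb : b ≠ 0) (hT : T < a * b) :
    cnt a b T = ∑ m ∈ range b, (if m * a ≤ T then (T - m * a) / b + 1 else 0) := by
  rw [cnt_eq_sum a b T ha hb]
  have h1 : ∑ m ∈ range (T + 1), (if m * a ≤ T then (T - m * a) / b + 1 else 0)
      = ∑ m ∈ range (T + 1 + b), (if m * a ≤ T then (T - m * a) / b + 1 else 0) := by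
    apply Finset.sum_subset (Finset.range_subset_range.mpr (by omega))
    intro m _ hm
    rw [Finset.mem_range] at hm
    push_neg at hm
    have : m * 1 ≤ m * a := Nat.mul_le_mul_left _ (by omega)
    rw [if_neg (by omega)]
  have h2 : ∑ m ∈ range b, (if m * a ≤ T then (T - m * a) / b + 1 else 0)
      = ∑ m ∈ range (T + 1 + b), (if m * a ≤ T then (T - m * a) / b + 1 else 0) := by
    apply Finset.sum_subset (Finset.range_subset_range.mpr (by omega))
    intro m _ hm
    rw [Finset.mem_range] at hm
    push_neg at hm
    have : b * a ≤ m * a := Nat.mul_le_mul_right _ (by omega)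
    rw [if_neg (by rw [mul_comm a b] at hT; omega)]
  rw [h1, h2]

lemma inner_sum (a b m : ℕ) (ha : a ≠ 0) (hb : b ≠ 0) (hm : m < b) :
    ∑ T ∈ range (a * b), (if m * a ≤ T then (((T - m * a) / b + 1 : ℕ) : ℂ) else 0)
      = (((b - m) * a : ℕ) : ℂ)
        + ((((b - m) * a) / b : ℕ) : ℂ)
          * ((((b - m) * a : ℕ) : ℂ) + ((((b - m) * a) % b : ℕ) : ℂ) - b) / 2 := by
  have hma : m * a ≤ a * b := by
    calc m * a ≤ b * a := Nat.mul_le_mul_right _ (by omega)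
    _ = a * b := mul_comm b a
  have hK : a * b - m * a = (b - m) * a := by rw [tsub_mul, mul_comm a b]
  rw [Finset.range_eq_Ico, ← Finset.sum_Ico_consecutive _ (Nat.zero_le (m * a)) hma]
  have hzero : ∑ T ∈ Finset.Ico 0 (m * a),
      (if m * a ≤ T then (((T - m * a) / b + 1 : ℕ) : ℂ) else 0) = 0 := by
    apply Finset.sum_eq_zero
    intro T hT
    rw [Finset.mem_Ico] at hT
    rw [if_neg (by omega)]
  rw [hzero, zero_add, Finset.sum_Ico_eq_sum_range]
  have hsimp : ∀ k, (if m * a ≤ m * a + k then (((m * a + k - m * a) / b + 1 : ℕ) : ℂ) else 0)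
      = ((k / b : ℕ) : ℂ) + 1 := by
    intro k
    rw [if_pos (by omega)]
    have e : m * a + k - m * a = k := by omega
    rw [e]; push_cast; ring
  rw [Finset.sum_congr rfl (fun k _ => hsimp k), Finset.sum_add_distrib, sumdiv b hb,
    Finset.sum_const, Finset.card_range, hK]
  simp only [nsmul_eq_mul, mul_one]
  ring

lemma exists_inv (a b : ℕ) (hb : b ≠ 0) (hab : Nat.Coprime a b) :
    ∃ x, a * x ≡ 1 [MOD b] := by
  haveI : NeZero b := ⟨hb⟩
  refine ⟨((a : ZMod b)⁻¹).val, ?_⟩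
  rw [← ZMod.natCast_eq_natCast_iff]
  push_cast
  rw [ZMod.natCast_val, ZMod.cast_id]
  rw [ZMod.mul_inv_of_unit _ ((ZMod.isUnit_iff_coprime a b).mpr hab)]

lemma sum_shift_mod_bij (a b : ℕ) (hb : b ≠ 0) (hab : Nat.Coprime a b) (φ : ℕ → ℂ) :
    ∑ j ∈ range b, φ ((j + 1) * a % b) = ∑ u ∈ range b, φ u := by
  obtain ⟨x, hx⟩ := exists_inv a b hb hab
  apply Finset.sum_nbij' (i := fun j => (j + 1) * a % b) (j := fun u => (x * u + (b - 1)) % b)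
  · intro j _; exact Finset.mem_range.mpr (Nat.mod_lt _ (by omega))
  · intro u _; exact Finset.mem_range.mpr (Nat.mod_lt _ (by omega))
  · -- left inverse
    intro j hj
    rw [Finset.mem_range] at hj
    have h1 : x * ((j + 1) * a % b) + (b - 1) ≡ x * ((j + 1) * a) + (b - 1) [MOD b] :=
      Nat.ModEq.add_right _ ((Nat.mod_modEq _ b).mul_left x)
    have h2 : x * ((j + 1) * a) = (a * x) * (j + 1) := by ring
    have h3 : (a * x) * (j + 1) + (b - 1) ≡ 1 * (j + 1) + (b - 1) [MOD b] :=
      Nat.ModEq.add_right _ (hx.mul_right _)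
    have h4 : 1 * (j + 1) + (b - 1) = j + b := by omega
    have hchain : x * ((j + 1) * a % b) + (b - 1) ≡ j + b [MOD b] := by
      rw [← h4]
      exact h1.trans (by rw [h2]; exact h3)
    have h5 : (x * ((j + 1) * a % b) + (b - 1)) % b = (j + b) % b := hchain
    rw [h5, Nat.add_mod_right, Nat.mod_eq_of_lt hj]
  · -- right inverse
    intro u hu
    rw [Finset.mem_range] at hu
    have h1 : ((x * u + (b - 1)) % b + 1) * a ≡ (x * u + (b - 1) + 1) * a [MOD b] :=
      Nat.ModEq.mul_right a (Nat.ModEq.add_right 1 (Nat.mod_modEq _ b))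
    have h2 : x * u + (b - 1) + 1 = x * u + b := by omega
    have h3 : (x * u + b) * a = (a * x) * u + b * a := by ring
    have h4 : (a * x) * u + b * a ≡ 1 * u + 0 * a [MOD b] :=
      Nat.ModEq.add (hx.mul_right u)
        (Nat.ModEq.mul_right a ((Nat.modEq_zero_iff_dvd).mpr dvd_rfl))
    have t1 : ((x * u + (b - 1)) % b + 1) * a ≡ (a * x) * u + b * a [MOD b] := by
      rw [← h3, ← h2]; exact h1
    have hchain : ((x * u + (b - 1)) % b + 1) * a ≡ u [MOD b] := by
      simpa using t1.trans h4
    have h5 : ((x * u + (b - 1)) % b + 1) * a % b = u % b := hchain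
    rw [h5, Nat.mod_eq_of_lt hu]
  · intro j _; rfl

lemma sum_range_cast1 (n : ℕ) : ∑ j ∈ range n, ((j : ℂ) + 1) = (n : ℂ) * ((n : ℂ) + 1) / 2 := by
  induction n with
  | zero => simp
  | succ n ih => rw [Finset.sum_range_succ, ih]; push_cast; ring

lemma sum_range_sq_cast1 (n : ℕ) :
    ∑ j ∈ range n, ((j : ℂ) + 1) ^ 2 = (n : ℂ) * ((n : ℂ) + 1) * (2 * (n : ℂ) + 1) / 6 := by
  induction n with
  | zero => simp
  | succ n ih => rw [Finset.sum_range_succ, ih]; push_cast; ring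

set_option maxHeartbeats 1000000 in
lemma sum_cnt_eq (a b : ℕ) (ha : a ≠ 0) (hb : b ≠ 0) (hab : Nat.Coprime a b) :
    ∑ T ∈ range (a * b), ((cnt a b T : ℕ) : ℂ) = ∑ T ∈ range (a * b), polyPart a b T := by
  have ha0 : (a : ℂ) ≠ 0 := Nat.cast_ne_zero.mpr ha
  have hb0 : (b : ℂ) ≠ 0 := Nat.cast_ne_zero.mpr hb
  have step1 : ∑ T ∈ range (a * b), ((cnt a b T : ℕ) : ℂ)
      = ∑ m ∈ range b, ∑ T ∈ range (a * b),
          (if m * a ≤ T then (((T - m * a) / b + 1 : ℕ) : ℂ) else 0) := by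
    rw [Finset.sum_comm]
    apply Finset.sum_congr rfl
    intro T hT
    rw [Finset.mem_range] at hT
    rw [cnt_eq_sum_b a b T ha hb hT, Nat.cast_sum]
    apply Finset.sum_congr rfl
    intro m _
    rw [apply_ite (Nat.cast : ℕ → ℂ), Nat.cast_zero]
  rw [step1]
  have step2 : ∀ m ∈ range b, ∑ T ∈ range (a * b),
      (if m * a ≤ T then (((T - m * a) / b + 1 : ℕ) : ℂ) else 0)
      = (((b - m) * a : ℕ) : ℂ)
        + ((((b - m) * a) / b : ℕ) : ℂ)
          * ((((b - m) * a : ℕ) : ℂ) + ((((b - m) * a) % b : ℕ) : ℂ) - b) / 2 := by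
    intro m hm
    exact inner_sum a b m ha hb (Finset.mem_range.mp hm)
  rw [Finset.sum_congr rfl step2]
  have step3 : (∑ m ∈ range b, ((((b - m) * a : ℕ) : ℂ)
        + ((((b - m) * a) / b : ℕ) : ℂ)
          * ((((b - m) * a : ℕ) : ℂ) + ((((b - m) * a) % b : ℕ) : ℂ) - b) / 2))
      = ∑ j ∈ range b, ((((j + 1) * a : ℕ) : ℂ)
        + ((((j + 1) * a) / b : ℕ) : ℂ)
          * ((((j + 1) * a : ℕ) : ℂ) + ((((j + 1) * a) % b : ℕ) : ℂ) - b) / 2) := by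
    conv_rhs => rw [← Finset.sum_range_reflect]
    apply Finset.sum_congr rfl
    intro m hm
    rw [Finset.mem_range] at hm
    have e : b - 1 - m + 1 = b - m := by omega
    rw [e]
  rw [step3]
  have step4 : ∀ j ∈ range b, ((((j + 1) * a : ℕ) : ℂ)
        + ((((j + 1) * a) / b : ℕ) : ℂ)
          * ((((j + 1) * a : ℕ) : ℂ) + ((((j + 1) * a) % b : ℕ) : ℂ) - b) / 2)
      = ((a : ℂ) ^ 2 / (2 * b)) * ((j : ℂ) + 1) ^ 2 + ((a : ℂ) / 2) * ((j : ℂ) + 1)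
        + (((b : ℂ) * ((((j + 1) * a) % b : ℕ) : ℂ)
            - ((((j + 1) * a) % b : ℕ) : ℂ) ^ 2) / (2 * b)) := by
    intro j _
    have hdm : (b : ℂ) * ((((j + 1) * a) / b : ℕ) : ℂ) + ((((j + 1) * a) % b : ℕ) : ℂ)
        = (((j + 1) * a : ℕ) : ℂ) := by
      exact_mod_cast congrArg (Nat.cast : ℕ → ℂ) (Nat.div_add_mod ((j + 1) * a) b)
    have hL : (((j + 1) * a : ℕ) : ℂ) = ((j : ℂ) + 1) * (a : ℂ) := by push_cast; ring
    rw [hL] at hdm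
    have hq : ((((j + 1) * a) / b : ℕ) : ℂ)
        = (((j : ℂ) + 1) * (a : ℂ) - ((((j + 1) * a) % b : ℕ) : ℂ)) / b := by
      field_simp
      linear_combination hdm
    rw [hL, hq]
    field_simp
    ring
  rw [Finset.sum_congr rfl step4]
  rw [Finset.sum_add_distrib, Finset.sum_add_distrib, ← Finset.mul_sum, ← Finset.mul_sum]
  rw [sum_range_sq_cast1, sum_range_cast1]
  have step5 : ∑ j ∈ range b, (((b : ℂ) * ((((j + 1) * a) % b : ℕ) : ℂ)
        - ((((j + 1) * a) % b : ℕ) : ℂ) ^ 2) / (2 * b))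
      = ∑ u ∈ range b, (((b : ℂ) * (u : ℂ) - (u : ℂ) ^ 2) / (2 * b)) :=
    sum_shift_mod_bij a b hb hab (fun v => ((b : ℂ) * (v : ℂ) - (v : ℂ) ^ 2) / (2 * b))
  rw [step5]
  have step6 : ∑ u ∈ range b, (((b : ℂ) * (u : ℂ) - (u : ℂ) ^ 2) / (2 * b))
      = ((b : ℂ) * ((b : ℂ) * ((b : ℂ) - 1) / 2)
          - (b : ℂ) * ((b : ℂ) - 1) * (2 * (b : ℂ) - 1) / 6) / (2 * b) := by
    rw [← Finset.sum_div]
    congr 1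
    rw [Finset.sum_sub_distrib, ← Finset.mul_sum, sum_range_cast, sum_range_sq_cast]
  rw [step6]
  have polyside : ∑ T ∈ range (a * b), polyPart a b T
      = (((a * b : ℕ) : ℂ) * (((a * b : ℕ) : ℂ) - 1) * (2 * ((a * b : ℕ) : ℂ) - 1) / 6) * 6
          / (12 * a * b)
        + (((a * b : ℕ) : ℂ) * (((a * b : ℕ) : ℂ) - 1) / 2) * (6 * ((a : ℂ) + b + 1))
          / (12 * a * b)
        + ((a * b : ℕ) : ℂ) * ((3 * ((a : ℂ) * b + a + b) + (a : ℂ) ^ 2 + (b : ℂ) ^ 2 + 1)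
          / (12 * a * b)) := by
    have hrw : ∀ T ∈ range (a * b), polyPart a b T
        = (T : ℂ) ^ 2 * 6 / (12 * a * b) + (T : ℂ) * (6 * ((a : ℂ) + b + 1)) / (12 * a * b)
          + (3 * ((a : ℂ) * b + a + b) + (a : ℂ) ^ 2 + (b : ℂ) ^ 2 + 1) / (12 * a * b) := by
      intro T _
      rw [polyPart_alt a b T ha hb]
      field_simp
      ring
    rw [Finset.sum_congr rfl hrw, Finset.sum_add_distrib, Finset.sum_add_distrib]
    congr 1
    · congr 1
      · rw [← Finset.sum_div, ← Finset.sum_mul, sum_range_sq_cast]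
      · rw [← Finset.sum_div, ← Finset.sum_mul, sum_range_cast]
    · rw [Finset.sum_const, Finset.card_range, nsmul_eq_mul]
  rw [polyside]
  push_cast
  have h1 : (2 : ℂ) * b ≠ 0 := by simp [hb0]
  have h2 : (12 : ℂ) * a * b ≠ 0 := by simp [ha0, hb0]
  field_simp
  ring

lemma fF_eq_cnt (a b : ℕ) (ha : a ≠ 0) (hb : b ≠ 0) (hab : Nat.Coprime a b) (T : ℕ) :
    fF a b T = (cnt a b T : ℂ) := by
  set g : ℕ → ℂ := fun T => fF a b T - (cnt a b T : ℂ) with hg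
  have hpa : ∀ T, g (T + a) = g T := by
    intro T
    simp only [hg]
    rw [fF_rec_a a b T ha hb hab, cnt_rec_a a b T ha hb]
    push_cast
    ring
  have hpb : ∀ T, g (T + b) = g T := by
    intro T
    simp only [hg]
    rw [fF_rec_b a b T ha hb hab, cnt_rec_b a b T ha hb]
    push_cast
    ring
  have h1 : ∀ T, g (T + 1) = g T := by
    have hper := period_gcd a b hpa hpb
    have hg1 : Nat.gcd a b = 1 := hab
    rwa [hg1] at hper
  have hconst := const_of_period_one h1
  have hsum : ∑ T ∈ range (a * b), g T = ((a * b : ℕ) : ℂ) * g 0 := by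
    rw [Finset.sum_congr rfl (fun T _ => hconst T), Finset.sum_const, Finset.card_range,
      nsmul_eq_mul]
  have hzero : ∑ T ∈ range (a * b), g T = 0 := by
    simp only [hg]
    rw [Finset.sum_sub_distrib, sum_fF a b ha hb, sum_cnt_eq a b ha hb hab, sub_self]
  have hab0 : ((a * b : ℕ) : ℂ) ≠ 0 := Nat.cast_ne_zero.mpr (Nat.mul_ne_zero ha hb)
  have h0 : g 0 = 0 := (mul_eq_zero.mp (hsum.symm.trans hzero)).resolve_left hab0
  have hT := hconst T
  rw [h0] at hT
  have : fF a b T - (cnt a b T : ℂ) = 0 := hT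
  linear_combination this

lemma finite_val {c d : ℝ} (hc : 0 < c) (hd : 0 < d) (x : ℝ) :
    {p : ℕ × ℕ | (p.1 : ℝ) * c + (p.2 : ℝ) * d ≤ x}.Finite := by
  apply Set.Finite.subset (Set.finite_Icc (0, 0) (⌊x / c⌋₊, ⌊x / d⌋₊))
  rintro ⟨m, n⟩ hp
  simp only [Set.mem_setOf_eq] at hp
  rw [Set.mem_Icc]
  have hm0 : (0 : ℝ) ≤ (m : ℝ) * c := by positivity
  have hn0 : (0 : ℝ) ≤ (n : ℝ) * d := by positivity
  refine ⟨⟨Nat.zero_le _, Nat.zero_le _⟩, ⟨?_, ?_⟩⟩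
  · apply Nat.le_floor
    rw [le_div_iff₀ hc]
    simp only at hp ⊢
    linarith
  · apply Nat.le_floor
    rw [le_div_iff₀ hd]
    simp only at hp ⊢
    linarith

lemma val_set_eq (a b r t : ℕ) (ha : 0 < a) (hb : 0 < b) (hr : 0 < r) :
    {p : ℕ × ℕ | (p.1 : ℝ) * ((a : ℝ) / r) + (p.2 : ℝ) * ((b : ℝ) / r) ≤ (t : ℝ)}
      = {p : ℕ × ℕ | p.1 * a + p.2 * b ≤ t * r} := by
  ext p
  simp only [Set.mem_setOf_eq]
  have hr0 : (0 : ℝ) < (r : ℝ) := by positivity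
  have hval : (p.1 : ℝ) * ((a : ℝ) / r) + (p.2 : ℝ) * ((b : ℝ) / r)
      = ((p.1 * a + p.2 * b : ℕ) : ℝ) / r := by
    push_cast
    field_simp
  rw [hval, div_le_iff₀ hr0]
  constructor
  · intro h
    exact_mod_cast h
  · intro h
    exact_mod_cast h

lemma Nseq_le_iff (a b r t : ℕ) (ha : 0 < a) (hb : 0 < b) (hr : 0 < r) (k : ℕ) :
    Nseq ((a : ℝ) / r) ((b : ℝ) / r) k ≤ (t : ℝ)
      ↔ k + 1 ≤ {p : ℕ × ℕ | p.1 * a + p.2 * b ≤ t * r}.ncard := by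
  have hc : (0 : ℝ) < (a : ℝ) / r := by positivity
  have hd : (0 : ℝ) < (b : ℝ) / r := by positivity
  unfold Nseq
  constructor
  · -- hard direction
    intro hle
    by_contra hC
    push_neg at hC
    set c := (a : ℝ) / r with hcdef
    set d := (b : ℝ) / r with hddef
    set val : ℕ × ℕ → ℝ := fun p => (p.1 : ℝ) * c + (p.2 : ℝ) * d with hvdef
    have hF : {p : ℕ × ℕ | val p ≤ (t : ℝ) + 1}.Finite := finite_val hc hd _
    set W : Set ℝ := (val '' {p : ℕ × ℕ | val p ≤ (t : ℝ) + 1}) ∩ {y : ℝ | (t : ℝ) < y}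
      with hWdef
    have hW : W.Finite := Set.Finite.inter_of_left (hF.image val) _
    have hδ : ∃ δ : ℝ, 0 < δ ∧ δ ≤ 1 ∧ ∀ y ∈ W, (t : ℝ) + δ ≤ y := by
      by_cases hWne : W.Nonempty
      · have hmem : sInf W ∈ W := Set.Nonempty.csInf_mem hWne hW
        have htlt : (t : ℝ) < sInf W := hmem.2
        refine ⟨min (sInf W - t) 1, lt_min (by linarith) one_pos, min_le_right _ _, ?_⟩
        intro y hy
        have h1 : sInf W ≤ y := csInf_le hW.bddBelow hy
        have h2 : min (sInf W - t) 1 ≤ sInf W - t := min_le_left _ _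
        linarith
      · exact ⟨1, one_pos, le_refl 1, fun y hy => absurd ⟨y, hy⟩ hWne⟩
    obtain ⟨δ, hδ0, hδ1, hδW⟩ := hδ
    have hSne : Set.Nonempty {x : ℝ | 0 ≤ x ∧
        k + 1 ≤ {p : ℕ × ℕ | (p.1 : ℝ) * c + (p.2 : ℝ) * d ≤ x}.ncard} := by
      refine ⟨(k : ℝ) * c, by positivity, ?_⟩
      have himg : (fun i : ℕ => ((i, 0) : ℕ × ℕ)) '' (Set.Iic k)
          ⊆ {p : ℕ × ℕ | (p.1 : ℝ) * c + (p.2 : ℝ) * d ≤ (k : ℝ) * c} := by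
        rintro q ⟨i, hi, rfl⟩
        simp only [Set.mem_setOf_eq, Nat.cast_zero, zero_mul, add_zero]
        rw [Set.mem_Iic] at hi
        have : (i : ℝ) ≤ (k : ℝ) := by exact_mod_cast hi
        nlinarith
      have hcard : ((fun i : ℕ => ((i, 0) : ℕ × ℕ)) '' (Set.Iic k)).ncard = k + 1 := by
        rw [Set.ncard_image_of_injective _ (fun x y h => by simpa using h),
          ← Finset.coe_Iic, Set.ncard_coe_finset, Nat.card_Iic]

      calc k + 1 = ((fun i : ℕ => ((i, 0) : ℕ × ℕ)) '' (Set.Iic k)).ncard := hcard.symm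
        _ ≤ _ := Set.ncard_le_ncard himg (finite_val hc hd _)
    have hlt : sInf {x : ℝ | 0 ≤ x ∧
        k + 1 ≤ {p : ℕ × ℕ | (p.1 : ℝ) * c + (p.2 : ℝ) * d ≤ x}.ncard} < (t : ℝ) + δ :=
      lt_of_le_of_lt hle (by linarith)
    obtain ⟨x, hxS, hxlt⟩ := exists_lt_of_csInf_lt hSne hlt
    have hsub : {p : ℕ × ℕ | (p.1 : ℝ) * c + (p.2 : ℝ) * d ≤ x}
        ⊆ {p : ℕ × ℕ | val p ≤ (t : ℝ)} := by
      intro p hp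
      simp only [Set.mem_setOf_eq] at hp ⊢
      by_contra hpt
      push_neg at hpt
      have hpF : val p ≤ (t : ℝ) + 1 := by
        simp only [hvdef]
        calc (p.1 : ℝ) * c + (p.2 : ℝ) * d ≤ x := hp
          _ ≤ (t : ℝ) + 1 := by linarith
      have hyW : val p ∈ W := ⟨⟨p, hpF, rfl⟩, hpt⟩
      have := hδW _ hyW
      have hvp : val p ≤ x := hp
      linarith
    have hcount : k + 1 ≤ {p : ℕ × ℕ | val p ≤ (t : ℝ)}.ncard :=
      le_trans hxS.2 (Set.ncard_le_ncard hsub (finite_val hc hd _))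
    have hEq : {p : ℕ × ℕ | val p ≤ (t : ℝ)} = {p : ℕ × ℕ | p.1 * a + p.2 * b ≤ t * r} :=
      val_set_eq a b r t ha hb hr
    rw [hEq] at hcount
    omega
  · intro hC
    apply csInf_le ⟨0, fun x hx => hx.1⟩
    refine ⟨by positivity, ?_⟩
    rw [val_set_eq a b r t ha hb hr]
    exact hC


end EhrhartAux

open Complex in
theorem ehrhart_count (a b r t : ℕ) (ha : 0 < a) (hb : 0 < b) (hr : 0 < r) (ht : 0 < t)
    (hab : Nat.Coprime a b) :
    (({p : ℕ × ℕ | p.1 * a + p.2 * b ≤ t * r}.ncard : ℂ) =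
      ((t * r : ℂ)) ^ 2 / (2 * a * b)
        + (t * r : ℂ) / 2 * (1 / a + 1 / b + 1 / (a * b))
        + (1 / 4) * (1 + 1 / a + 1 / b)
        + (1 / 12) * ((a : ℂ) / b + (b : ℂ) / a + 1 / (a * b))
        + (1 / a) * ∑ j ∈ Finset.Icc 1 (a - 1),
            Complex.exp (2 * Real.pi * I / a) ^ (-(j * t * r : ℤ)) /
              ((1 - Complex.exp (2 * Real.pi * I / a) ^ (j * b)) *
                (1 - Complex.exp (2 * Real.pi * I / a) ^ j))
        + (1 / b) * ∑ l ∈ Finset.Icc 1 (b - 1),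
            Complex.exp (2 * Real.pi * I / b) ^ (-(l * t * r : ℤ)) /
              ((1 - Complex.exp (2 * Real.pi * I / b) ^ (l * a)) *
                (1 - Complex.exp (2 * Real.pi * I / b) ^ l))) ∧
    {p : ℕ × ℕ | p.1 * a + p.2 * b ≤ t * r}.ncard =
      sSup {k : ℕ | Nseq ((a : ℝ) / r) ((b : ℝ) / r) k ≤ t} + 1 := by
  have ha' : a ≠ 0 := ha.ne'
  have hb' : b ≠ 0 := hb.ne'
  have hsetF : {p : ℕ × ℕ | p.1 * a + p.2 * b ≤ t * r} = ↑(EhrhartAux.cntF a b (t * r)) := by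
    ext p
    rw [Finset.mem_coe, EhrhartAux.mem_cntF ha' hb']
    simp
  constructor
  · rw [hsetF, Set.ncard_coe_finset]
    have hfc := EhrhartAux.fF_eq_cnt a b ha' hb' hab (t * r)
    have hcc : ((EhrhartAux.cntF a b (t * r)).card : ℂ) = ((EhrhartAux.cnt a b (t * r) : ℕ) : ℂ) := rfl
    rw [hcc, ← hfc]
    have ea : EhrhartAux.rootSum a b (t * r)
        = ∑ j ∈ Finset.Icc 1 (a - 1),
            Complex.exp (2 * Real.pi * I / a) ^ (-(j * t * r : ℤ)) /
              ((1 - Complex.exp (2 * Real.pi * I / a) ^ (j * b)) *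
                (1 - Complex.exp (2 * Real.pi * I / a) ^ j)) := by
      unfold EhrhartAux.rootSum
      apply Finset.sum_congr rfl
      intro j _
      congr 1
      congr 1
      push_cast
      ring
    have eb : EhrhartAux.rootSum b a (t * r)
        = ∑ l ∈ Finset.Icc 1 (b - 1),
            Complex.exp (2 * Real.pi * I / b) ^ (-(l * t * r : ℤ)) /
              ((1 - Complex.exp (2 * Real.pi * I / b) ^ (l * a)) *
                (1 - Complex.exp (2 * Real.pi * I / b) ^ l)) := by
      unfold EhrhartAux.rootSum
      apply Finset.sum_congr rfl
      intro l _
      congr 1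
      congr 1
      push_cast
      ring
    have hff : EhrhartAux.fF a b (t * r) = EhrhartAux.polyPart a b (t * r)
        + (1 / (a : ℂ)) * EhrhartAux.rootSum a b (t * r)
        + (1 / (b : ℂ)) * EhrhartAux.rootSum b a (t * r) := rfl
    rw [hff, ea, eb]
    unfold EhrhartAux.polyPart
    push_cast
    ring
  · set C := {p : ℕ × ℕ | p.1 * a + p.2 * b ≤ t * r}.ncard with hCdef
    have hC1 : 1 ≤ C := by
      rw [hCdef, hsetF, Set.ncard_coe_finset]
      refine Finset.card_pos.mpr ⟨(0, 0), ?_⟩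
      rw [EhrhartAux.mem_cntF ha' hb']
      simp
    have hset2 : {k : ℕ | Nseq ((a : ℝ) / r) ((b : ℝ) / r) k ≤ (t : ℝ)} = Set.Iio C := by
      ext k
      rw [Set.mem_setOf_eq, EhrhartAux.Nseq_le_iff a b r t ha hb hr k, Set.mem_Iio, ← hCdef]
      omega
    rw [hset2]
    have hsup : sSup (Set.Iio C) = C - 1 := by
      apply le_antisymm
      · apply csSup_le ⟨0, by rw [Set.mem_Iio]; omega⟩
        intro k hk
        rw [Set.mem_Iio] at hk
        omega
      · apply le_csSup ⟨C, fun k hk => le_of_lt (Set.mem_Iio.mp hk)⟩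
        rw [Set.mem_Iio]
        omega
    rw [hsup]
    omega
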